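/- Every graph G with sim-width at most w and with no induced minor isomorphic to K_t ⊠ K_t or K_t ⊠ S_t has mim-width at most 8(w+1)t³ − 1. More precisely, any branch-decomposition of G of sim-width at most w has mim-width at most 8(w+1)t³ − 1. -/

import Mathlib

open SimpleGraph
open scoped Classical
set_option linter.unusedSectionVars false
set_option maxHeartbeats 1000000

noncomputable section

/-- The graph `K_t ⊠ S_t`: a clique of size `t` (the `inl` part), an independent set of
size `t` (the `inr` part), joined by a perfect matching. -/
def ktst (t : ℕ) : SimpleGraph (Fin t ⊕ Fin t) :=
  SimpleGraph.fromRel (fun x y =>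
    match x, y with
    | Sum.inl i, Sum.inl j => i ≠ j
    | Sum.inl i, Sum.inr j => i = j
    | _, _ => False)

/-- The graph `K_t ⊠ K_t`: two cliques of size `t` joined by a perfect matching. -/
def ktkt (t : ℕ) : SimpleGraph (Fin t ⊕ Fin t) :=
  SimpleGraph.fromRel (fun x y =>
    match x, y with
    | Sum.inl i, Sum.inl j => i ≠ j
    | Sum.inr i, Sum.inr j => i ≠ j
    | Sum.inl i, Sum.inr j => i = j
    | _, _ => False)

/-- The cycle graph on `ZMod n`. -/
def cycleG (n : ℕ) : SimpleGraph (ZMod n) :=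
  SimpleGraph.fromRel (fun x y => y = x + 1)

/-- `σ` enumerates the vertices of `G` as a co-comparability ordering. -/
def IsCoCompOrdering {V : Type} {n : ℕ} (G : SimpleGraph V) (σ : Fin n ≃ V) : Prop :=
  ∀ i j k : Fin n, i < j → j < k → G.Adj (σ i) (σ k) →
    G.Adj (σ j) (σ i) ∨ G.Adj (σ j) (σ k)

/-- `G` contains `H` as an induced subgraph. -/
def ContainsInducedIso {V W : Type} (G : SimpleGraph V) (H : SimpleGraph W) : Prop :=
  ∃ f : W → V, Function.Injective f ∧ ∀ x y, H.Adj x y ↔ G.Adj (f x) (f y)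

/-- A graph is chordal iff it has no induced cycle of length at least 4. -/
def Chordal {V : Type} (G : SimpleGraph V) : Prop :=
  ∀ n, 4 ≤ n → ¬ ContainsInducedIso G (cycleG n)

/-- `G` contains `H` as an induced minor (via an induced minor model). -/
def HasInducedMinor {V W : Type} (G : SimpleGraph V) (H : SimpleGraph W) : Prop :=
  ∃ S : W → Set V,
    (∀ w, (G.induce (S w)).Connected) ∧
    (∀ w w', w ≠ w' → Disjoint (S w) (S w')) ∧
    (∀ w w', H.Adj w w' → ∃ a ∈ S w, ∃ b ∈ S w', G.Adj a b) ∧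
    (∀ w w', w ≠ w' → ¬ H.Adj w w' → ∀ a ∈ S w, ∀ b ∈ S w', ¬ G.Adj a b)

/-- `G` contains `K_t` as a minor (branch sets). -/
def HasCliqueMinor {V : Type} (G : SimpleGraph V) (t : ℕ) : Prop :=
  ∃ S : Fin t → Set V,
    (∀ i, (G.induce (S i)).Connected) ∧
    (∀ i j, i ≠ j → Disjoint (S i) (S j)) ∧
    (∀ i j, i ≠ j → ∃ a ∈ S i, ∃ b ∈ S j, G.Adj a b)

/-- There is an induced matching of `G` of size `m` between `A` and its complement:
the `2m` matched vertices induce exactly the `m` matching edges in `G`. -/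
def IsSimMatching {V : Type} (G : SimpleGraph V) (A : Set V) (m : ℕ) : Prop :=
  ∃ a b : Fin m → V,
    Function.Injective a ∧ Function.Injective b ∧
    (∀ i, a i ∈ A) ∧ (∀ i, b i ∉ A) ∧
    (∀ i j, G.Adj (a i) (b j) ↔ i = j) ∧
    (∀ i j, ¬ G.Adj (a i) (a j)) ∧
    (∀ i j, ¬ G.Adj (b i) (b j))

/-- There is an induced matching of size `m` in the bipartite graph `G[A, V \ A]`
of edges crossing the cut. -/
def IsMimMatching {V : Type} (G : SimpleGraph V) (A : Set V) (m : ℕ) : Prop :=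
  ∃ a b : Fin m → V,
    Function.Injective a ∧ Function.Injective b ∧
    (∀ i, a i ∈ A) ∧ (∀ i, b i ∉ A) ∧
    (∀ i j, G.Adj (a i) (b j) ↔ i = j)

def simval {V : Type} (G : SimpleGraph V) (A : Set V) : ℕ :=
  sSup {m | IsSimMatching G A m}

def mimval {V : Type} (G : SimpleGraph V) (A : Set V) : ℕ :=
  sSup {m | IsMimMatching G A m}

/-- GF(2)-rank of the `A × Aᶜ` submatrix of the adjacency matrix: the dimension of the
span of the rows of that submatrix (rows extended by zero on columns of `A`). -/
def cutrk {V : Type} [Fintype V] (G : SimpleGraph V) (A : Set V) : ℕ :=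
  Module.finrank (ZMod 2) (Submodule.span (ZMod 2)
    {r : V → ZMod 2 | ∃ a ∈ A, r = fun v => if v ∉ A ∧ G.Adj a v then 1 else 0})

/-- A branch-decomposition of a graph on vertex set `V`: a finite subcubic tree together
with an injection of `V` onto its leaves. -/
structure BranchDecomp (V : Type) [Fintype V] where
  β : Type
  finβ : Fintype β
  T : SimpleGraph β
  connected : T.Connected
  acyclic : T.IsAcyclic
  subcubic : ∀ x : β, (T.neighborSet x).ncard = 1 ∨ (T.neighborSet x).ncard = 3
  L : V → β
  inj : Function.Injective L
  leaves : ∀ x : β, (T.neighborSet x).ncard = 1 ↔ ∃ v, L v = x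

/-- The side of the cut induced by the tree edge `xy`, on the side of `x`. -/
def BranchDecomp.cut {V : Type} [Fintype V] (D : BranchDecomp V) (x y : D.β) : Set V :=
  {v | (D.T.deleteEdges {s(x, y)}).Reachable (D.L v) x}

/-- The `f`-width of a graph on vertex set `V`: minimum over branch-decompositions of the
maximum of `f` over the cuts of the decomposition. -/
def fWidth {V : Type} [Fintype V] (f : Set V → ℕ) : ℕ :=
  sInf {w | ∃ D : BranchDecomp V, ∀ x y, D.T.Adj x y → f (D.cut x y) ≤ w}

def simw {V : Type} [Fintype V] (G : SimpleGraph V) : ℕ := fWidth (simval G)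
def mimw {V : Type} [Fintype V] (G : SimpleGraph V) : ℕ := fWidth (mimval G)
def rankw {V : Type} [Fintype V] (G : SimpleGraph V) : ℕ := fWidth (cutrk G)

/-- Contraction of the edge `v₁v₂`: the vertex `v₂` is removed and `v₁` plays the role of
the contracted vertex `z`, adjacent to all former neighbors of `v₁` or `v₂`. -/
def contractE {V : Type} (G : SimpleGraph V) (v1 v2 : V) : SimpleGraph {v : V // v ≠ v2} :=
  SimpleGraph.fromRel (fun x y =>
    G.Adj x y ∨ ((x : V) = v1 ∧ G.Adj v2 y) ∨ ((y : V) = v1 ∧ G.Adj (x : V) v2))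

/-- The `(p × q)` column-clique grid. -/
def ccGrid (p q : ℕ) : SimpleGraph (Fin p × Fin q) :=
  SimpleGraph.fromRel (fun u v =>
    (u.2 = v.2) ∨ (u.1 = v.1 ∧ ((u.2 : ℕ) + 1 = v.2 ∨ (v.2 : ℕ) + 1 = u.2)))

/-- The `(p × q)` Hsu-clique chain graph. -/
def hsu (p q : ℕ) : SimpleGraph (Fin p × Fin q) :=
  SimpleGraph.fromRel (fun u v =>
    (u.2 = v.2) ∨ ((u.2 : ℕ) + 1 = v.2 ∧ u.1 ≤ v.1))

/-- The `(k × k)` grid graph. -/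
def gridG (k : ℕ) : SimpleGraph (Fin k × Fin k) :=
  SimpleGraph.fromRel (fun u v =>
    (u.1 = v.1 ∧ (u.2 : ℕ) + 1 = v.2) ∨ (u.2 = v.2 ∧ (u.1 : ℕ) + 1 = v.1))

/-- A tree-decomposition of `G`. -/
structure TreeDecomp (V : Type) (G : SimpleGraph V) where
  β : Type
  finβ : Fintype β
  T : SimpleGraph β
  connected : T.Connected
  acyclic : T.IsAcyclic
  B : β → Set V
  coverV : ∀ v : V, ∃ t, v ∈ B t
  coverE : ∀ u v, G.Adj u v → ∃ t, u ∈ B t ∧ v ∈ B t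
  coherent : ∀ v : V, (T.induce {t | v ∈ B t}).Connected

/-- Tree-width. -/
def tw {V : Type} (G : SimpleGraph V) : ℕ :=
  sInf {k | ∃ D : TreeDecomp V G, ∀ t, (D.B t).ncard ≤ k + 1}

/-- `G` is `d`-degenerate: every (induced) subgraph has a vertex of degree at most `d`. -/
def Degenerate {V : Type} (G : SimpleGraph V) (d : ℕ) : Prop :=
  ∀ S : Set V, S.Nonempty → ∃ v ∈ S, {u ∈ S | G.Adj v u}.ncard ≤ d

/-- Every graph on `N` vertices contains a clique of size `k` or an independent set of
size `l`. -/
def ramseyProp (N k l : ℕ) : Prop :=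
  ∀ G : SimpleGraph (Fin N),
    (∃ s : Finset (Fin N), G.IsNClique k s) ∨ (∃ s : Finset (Fin N), Gᶜ.IsNClique l s)

/-- The Ramsey number `R(k, l)`. -/
def ramsey (k l : ℕ) : ℕ := sInf {N | ramseyProp N k l}

/-- `G` is a circle graph: the intersection graph of chords of a circle, equivalently the
overlap graph of a family of intervals with pairwise distinct endpoints. -/
def IsCircleGraph {V : Type} (G : SimpleGraph V) : Prop :=
  ∃ a b : V → ℝ, (∀ v, a v < b v) ∧
    (∀ v w : V, v ≠ w → a v ≠ a w ∧ a v ≠ b w ∧ b v ≠ a w ∧ b v ≠ b w) ∧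
    (∀ v w, G.Adj v w ↔
      (a v < a w ∧ a w < b v ∧ b v < b w) ∨ (a w < a v ∧ a v < b w ∧ b w < b v))

/-- Vertex set of the split graph witnessing unbounded mim-width: a clique `Fin m`
together with one independent vertex for each nonempty subset of the clique. -/
abbrev splitV (m : ℕ) := Fin m ⊕ {S : Finset (Fin m) // S.Nonempty}

/-- The split graph with clique of size `m` and an independent set of size `2^m - 1`
whose vertices have pairwise distinct nonempty neighborhoods in the clique. -/
def splitG (m : ℕ) : SimpleGraph (splitV m) :=
  SimpleGraph.fromRel (fun x y =>
    match x, y with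
    | Sum.inl i, Sum.inl j => i ≠ j
    | Sum.inl i, Sum.inr S => i ∈ S.1
    | _, _ => False)

end



namespace DMwork

variable {ι : Type} [DecidableEq ι]

def Step (R : ι → ι → Prop) (s : Finset ι) (u v : ι) : Prop := u ∈ s ∧ v ∈ s ∧ R u v

def ReachIn (R : ι → ι → Prop) (s : Finset ι) : ι → ι → Prop :=
  Relation.ReflTransGen (Step R s)

def ConnOn (R : ι → ι → Prop) (s : Finset ι) : Prop :=
  ∀ x ∈ s, ∀ y ∈ s, ReachIn R s x y

def IndepOn (R : ι → ι → Prop) (s : Finset ι) : Prop :=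
  ∀ x ∈ s, ∀ y ∈ s, x ≠ y → ¬ R x y

def AdjSets (R : ι → ι → Prop) (s t : Finset ι) : Prop := ∃ x ∈ s, ∃ y ∈ t, R x y

lemma AdjSets.symm' {R : ι → ι → Prop} (hsym : Symmetric R) {s t : Finset ι}
    (h : AdjSets R s t) : AdjSets R t s := by
  obtain ⟨x, hx, y, hy, hR⟩ := h
  exact ⟨y, hy, x, hx, hsym hR⟩

lemma IndepOn.mono {R : ι → ι → Prop} {s t : Finset ι} (hst : s ⊆ t)
    (h : IndepOn R t) : IndepOn R s := fun x hx y hy hxy => h x (hst hx) y (hst hy) hxy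

lemma ReachIn.mono {R : ι → ι → Prop} {s t : Finset ι} (hst : s ⊆ t) {x y : ι}
    (h : ReachIn R s x y) : ReachIn R t x y := by
  refine Relation.ReflTransGen.mono ?_ x y h
  rintro u v ⟨hu, hv, hR⟩
  exact ⟨hst hu, hst hv, hR⟩

lemma ReachIn.symm' {R : ι → ι → Prop} (hsym : Symmetric R) {s : Finset ι} {x y : ι}
    (h : ReachIn R s x y) : ReachIn R s y x := by
  induction h with
  | refl => exact Relation.ReflTransGen.refl
  | tail _ hstep ih =>
      obtain ⟨hu, hv, hR⟩ := hstep
      exact Relation.ReflTransGen.head ⟨hv, hu, hsym hR⟩ ih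

lemma ConnOn.insert' {R : ι → ι → Prop} (hsym : Symmetric R) {D : Finset ι} {u p : ι}
    (hD : ConnOn R D) (hu : u ∈ D) (hR : R u p) : ConnOn R (insert p D) := by
  have hp : p ∈ insert p D := Finset.mem_insert_self _ _
  have key : ∀ y ∈ D, ReachIn R (insert p D) p y := by
    intro y hy
    exact Relation.ReflTransGen.head ⟨hp, Finset.mem_insert_of_mem hu, hsym hR⟩
      (ReachIn.mono (Finset.subset_insert _ _) (hD u hu y hy))
  intro x hx y hy
  have hx' : ReachIn R (insert p D) p x := by
    rcases Finset.mem_insert.1 hx with h | h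
    · subst h; exact Relation.ReflTransGen.refl
    · exact key x h
  have hy' : ReachIn R (insert p D) p y := by
    rcases Finset.mem_insert.1 hy with h | h
    · subst h; exact Relation.ReflTransGen.refl
    · exact key y h
  exact Relation.ReflTransGen.trans (ReachIn.symm' hsym hx') hy'

/-- maximum size of an `R`-independent subset of `S` -/
noncomputable def maxIndep (R : ι → ι → Prop) (S : Finset ι) : ℕ :=
  sSup {n | ∃ T ⊆ S, IndepOn R T ∧ T.card = n}

lemma maxIndep_spec (R : ι → ι → Prop) (S : Finset ι) :
    ∃ T ⊆ S, IndepOn R T ∧ T.card = maxIndep R S := by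
  have hne : {n | ∃ T ⊆ S, IndepOn R T ∧ T.card = n}.Nonempty :=
    ⟨0, ∅, Finset.empty_subset _, fun x hx => absurd hx (Finset.notMem_empty x), Finset.card_empty⟩
  have hbdd : BddAbove {n | ∃ T ⊆ S, IndepOn R T ∧ T.card = n} := by
    refine ⟨S.card, ?_⟩
    rintro n ⟨T, hT, _, rfl⟩
    exact Finset.card_le_card hT
  exact Nat.sSup_mem hne hbdd

lemma le_maxIndep {R : ι → ι → Prop} {S T : Finset ι} (hT : T ⊆ S) (h : IndepOn R T) :
    T.card ≤ maxIndep R S := by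
  have hbdd : BddAbove {n | ∃ T ⊆ S, IndepOn R T ∧ T.card = n} := by
    refine ⟨S.card, ?_⟩
    rintro n ⟨T, hT, _, rfl⟩
    exact Finset.card_le_card hT
  exact le_csSup hbdd ⟨T, hT, h, rfl⟩

lemma one_le_maxIndep {R : ι → ι → Prop} {S : Finset ι} (h : S.Nonempty) :
    1 ≤ maxIndep R S := by
  obtain ⟨v, hv⟩ := h
  have := le_maxIndep (R := R) (Finset.singleton_subset_iff.2 hv)
    (fun x hx y hy hxy => by
      simp only [Finset.mem_singleton] at hx hy
      exact absurd (hx.trans hy.symm) hxy)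
  simpa using this

lemma maxIndep_mono {R : ι → ι → Prop} {S S' : Finset ι} (h : S ⊆ S') :
    maxIndep R S ≤ maxIndep R S' := by
  obtain ⟨T, hT, hI, hc⟩ := maxIndep_spec R S
  rw [← hc]
  exact le_maxIndep (hT.trans h) hI



def Dom (R : ι → ι → Prop) (S D : Finset ι) : Prop :=
  ∀ v ∈ S, v ∉ D → ∃ u ∈ D, R u v

def Good (R : ι → ι → Prop) (S D I : Finset ι) : Prop :=
  D ⊆ S ∧ I ⊆ D ∧ D.Nonempty ∧ ConnOn R D ∧ IndepOn R I ∧ D.card ≤ 2 * I.card - 1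

lemma cross_lemma {R : ι → ι → Prop} {S : Finset ι} {U : Finset ι} :
    ∀ {x y : ι}, ReachIn R S x y → x ∈ U → y ∉ U →
      ∃ p q, p ∈ U ∧ q ∉ U ∧ p ∈ S ∧ q ∈ S ∧ R p q := by
  intro x y h
  induction h with
  | refl => intro hx hy; exact absurd hx hy
  | @tail b c _ hstep ih =>
      intro hx hy
      by_cases hb : b ∈ U
      · exact ⟨b, c, hb, hy, hstep.1, hstep.2.1, hstep.2.2⟩
      · exact ih hx hb

lemma grow {R : ι → ι → Prop} (hsym : Symmetric R) {S : Finset ι} (hconn : ConnOn R S) :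
    ∀ (fuel : ℕ) (D I : Finset ι), Good R S D I → S.card ≤ D.card + fuel →
      ∃ D' I', Good R S D' I' ∧ Dom R S D' := by
  intro fuel
  induction fuel with
  | zero =>
      intro D I hg hc
      have : D = S := Finset.eq_of_subset_of_card_le hg.1 (by omega)
      subst this
      exact ⟨D, I, hg, fun v hv hvD => absurd hv hvD⟩
  | succ f ih =>
      intro D I hg hc
      by_cases hdom : Dom R S D
      · exact ⟨D, I, hg, hdom⟩
      · obtain ⟨hDS, hID, hDne, hDconn, hIindep, hcard⟩ := hg
        have hex : ∃ v ∈ S, v ∉ D ∧ ∀ u ∈ D, ¬ R u v := by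
          by_contra hall
          apply hdom
          intro v hv hvD
          by_contra hnou
          exact hall ⟨v, hv, hvD, fun u hu hR => hnou ⟨u, hu, hR⟩⟩
        obtain ⟨v, hvS, hvD, hvnd⟩ := hex
        set U : Finset ι := D ∪ S.filter (fun z => ∃ u ∈ D, R u z) with hU
        have hvU : v ∉ U := by
          simp only [hU, Finset.mem_union, Finset.mem_filter]
          push_neg
          exact ⟨hvD, fun _ u hu => hvnd u hu⟩
        obtain ⟨d, hd⟩ := hDne
        have hcrossed : ∃ p q, p ∈ U ∧ q ∉ U ∧ p ∈ S ∧ q ∈ S ∧ R p q :=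
          cross_lemma (hconn d (hDS hd) v hvS) (Finset.mem_union_left _ hd) hvU
        obtain ⟨p, q, hpU, hqU, hpS, hqS, hpq⟩ := hcrossed
        have hqDom : q ∉ D ∧ ¬ ∃ u ∈ D, R u q := by
          constructor
          · intro h; exact hqU (Finset.mem_union_left _ h)
          · intro h; exact hqU (Finset.mem_union_right _ (Finset.mem_filter.2 ⟨hqS, h⟩))
        have hpD : p ∉ D := by
          intro hpD
          exact hqDom.2 ⟨p, hpD, hpq⟩
        have hpdom : ∃ u ∈ D, R u p := by
          rcases Finset.mem_union.1 hpU with h | h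
          · exact absurd h hpD
          · exact (Finset.mem_filter.1 h).2
        obtain ⟨u, huD, hup⟩ := hpdom
        have hqp : q ≠ p := fun h => hqU (h ▸ hpU)
        have hqD : q ∉ D := hqDom.1
        have hqI : q ∉ I := fun h => hqD (hID h)
        have hIcard : 1 ≤ I.card := by
          rcases Nat.eq_zero_or_pos I.card with h | h
          · exfalso; have := Finset.card_pos.2 ⟨d, hd⟩; omega
          · exact h
        set D' : Finset ι := insert p (insert q D) with hD'
        set I' : Finset ι := insert q I with hI'
        have hqpD : q ∉ insert p D := by
          simp only [Finset.mem_insert]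
          push_neg
          exact ⟨hqp, hqD⟩
        have hppD : p ∉ insert q D := by
          simp only [Finset.mem_insert]
          push_neg
          exact ⟨fun h => hqp h.symm, hpD⟩
        have hD'card : D'.card = D.card + 2 := by
          rw [hD', Finset.card_insert_of_notMem hppD, Finset.card_insert_of_notMem hqD]
        have hI'card : I'.card = I.card + 1 := Finset.card_insert_of_notMem hqI
        have hconn' : ConnOn R D' := by
          have h1 : ConnOn R (insert p D) := ConnOn.insert' hsym hDconn huD hup
          have h2 : ConnOn R (insert q (insert p D)) :=
            ConnOn.insert' hsym h1 (Finset.mem_insert_self _ _) hpq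
          rw [hD', Finset.insert_comm]
          exact h2
        have hindep' : IndepOn R I' := by
          intro x hx y hy hxy
          rw [hI'] at hx hy
          rcases Finset.mem_insert.1 hx with hxq | hxI
          · rcases Finset.mem_insert.1 hy with hyq | hyI
            · exact absurd (hxq.trans hyq.symm) hxy
            · intro hRxy
              refine hqDom.2 ⟨y, hID hyI, hsym ?_⟩
              rw [← hxq]; exact hRxy
          · rcases Finset.mem_insert.1 hy with hyq | hyI
            · intro hRxy
              refine hqDom.2 ⟨x, hID hxI, ?_⟩
              rw [← hyq]; exact hRxy
            · exact hIindep x hxI y hyI hxy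
        have hgood' : Good R S D' I' := by
          refine ⟨?_, ?_, ⟨p, by rw [hD']; exact Finset.mem_insert_self _ _⟩, hconn', hindep', ?_⟩
          · intro x hx
            rw [hD'] at hx
            rcases Finset.mem_insert.1 hx with rfl | hx
            · exact hpS
            · rcases Finset.mem_insert.1 hx with rfl | hx
              · exact hqS
              · exact hDS hx
          · intro x hx
            rw [hI'] at hx
            rw [hD']
            rcases Finset.mem_insert.1 hx with rfl | hx
            · exact Finset.mem_insert_of_mem (Finset.mem_insert_self _ _)
            · exact Finset.mem_insert_of_mem (Finset.mem_insert_of_mem (hID hx))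
          · omega
        exact ih D' I' hgood' (by omega)

lemma exists_conn_dom {R : ι → ι → Prop} (hsym : Symmetric R) {S : Finset ι}
    (hconn : ConnOn R S) (hne : S.Nonempty) :
    ∃ D I, Good R S D I ∧ Dom R S D := by
  obtain ⟨v, hv⟩ := hne
  have hgood : Good R S {v} {v} := by
    refine ⟨Finset.singleton_subset_iff.2 hv, Finset.Subset.refl _, ⟨v, Finset.mem_singleton_self v⟩,
      ?_, ?_, by simp⟩
    · intro x hx y hy
      simp only [Finset.mem_singleton] at hx hy
      subst hx; subst hy; exact Relation.ReflTransGen.refl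
    · intro x hx y hy hxy
      simp only [Finset.mem_singleton] at hx hy
      exact absurd (hx.trans hy.symm) hxy
  exact grow hsym hconn S.card {v} {v} hgood (by simp)



def GoodBlobs (R : ι → ι → Prop) (S : Finset ι) {q : ℕ} (B : Fin q → Finset ι) : Prop :=
  (∀ i, B i ⊆ S) ∧ (∀ i, (B i).Nonempty) ∧ (∀ i, ConnOn R (B i)) ∧
  (∀ i j, i ≠ j → Disjoint (B i) (B j)) ∧ (∀ i j, i ≠ j → AdjSets R (B i) (B j))

lemma GoodBlobs.mono {R : ι → ι → Prop} {S S' : Finset ι} {q : ℕ} {B : Fin q → Finset ι}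
    (hS : S ⊆ S') (h : GoodBlobs R S B) : GoodBlobs R S' B :=
  ⟨fun i => (h.1 i).trans hS, h.2.1, h.2.2.1, h.2.2.2.1, h.2.2.2.2⟩

lemma DMexact {R : ι → ι → Prop} (hsym : Symmetric R) :
    ∀ (n : ℕ) (S : Finset ι), S.card ≤ n → S.Nonempty →
      ∃ (q : ℕ) (B : Fin q → Finset ι), GoodBlobs R S B ∧
        S.card ≤ q * (2 * maxIndep R S - 1) := by
  intro n
  induction n with
  | zero =>
      intro S hcard hne
      exact absurd (Finset.card_pos.2 hne) (by omega)
  | succ n ih =>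
      intro S hcard hne
      obtain ⟨v, hv⟩ := hne
      set C : Finset ι := S.filter (fun u => ReachIn R S v u) with hC
      have hCS : C ⊆ S := Finset.filter_subset _ _
      have hvC : v ∈ C := by
        rw [hC]; exact Finset.mem_filter.2 ⟨hv, Relation.ReflTransGen.refl⟩
      have hbound : ∀ x ∈ C, ∀ z ∈ S, z ∉ C → ¬ R x z := by
        intro x hx z hz hzC hR
        apply hzC
        rw [hC] at hx ⊢
        obtain ⟨hxS, hreach⟩ := Finset.mem_filter.1 hx
        exact Finset.mem_filter.2 ⟨hz, Relation.ReflTransGen.tail hreach ⟨hxS, hz, hR⟩⟩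
      by_cases hCeq : C = S
      · -- S is connected
        have hSconn : ConnOn R S := by
          intro x hx y hy
          have hx' : ReachIn R S v x := by
            have : x ∈ C := hCeq ▸ hx
            rw [hC] at this
            exact (Finset.mem_filter.1 this).2
          have hy' : ReachIn R S v y := by
            have : y ∈ C := hCeq ▸ hy
            rw [hC] at this
            exact (Finset.mem_filter.1 this).2
          exact Relation.ReflTransGen.trans (ReachIn.symm' hsym hx') hy'
        obtain ⟨D, I, ⟨hDS, hID, hDne, hDconn, hIindep, hDcard⟩, hdom⟩ :=
          exists_conn_dom hsym hSconn ⟨v, hv⟩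
        have hIle : I.card ≤ maxIndep R S := le_maxIndep (hID.trans hDS) hIindep
        by_cases hresid : (S \ D).Nonempty
        · have hDpos : 1 ≤ D.card := Finset.card_pos.2 hDne
          have hsplit : (S \ D).card + D.card = S.card :=
            Finset.card_sdiff_add_card_eq_card hDS
          obtain ⟨q', B', hgb', hb'⟩ := ih (S \ D) (by omega) hresid
          have hαle : maxIndep R (S \ D) ≤ maxIndep R S :=
            maxIndep_mono (Finset.sdiff_subset)
          refine ⟨q' + 1, Fin.cases D B', ?_, ?_⟩
          · refine ⟨?_, ?_, ?_, ?_, ?_⟩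
            · refine Fin.cases ?_ ?_
              · simpa using hDS
              · intro i; simpa using (hgb'.1 i).trans Finset.sdiff_subset
            · refine Fin.cases ?_ ?_
              · simpa using hDne
              · intro i; simpa using hgb'.2.1 i
            · refine Fin.cases ?_ ?_
              · simpa using hDconn
              · intro i; simpa using hgb'.2.2.1 i
            · intro i j hij
              rcases Fin.eq_zero_or_eq_succ i with rfl | ⟨i', rfl⟩ <;>
                rcases Fin.eq_zero_or_eq_succ j with rfl | ⟨j', rfl⟩
              · exact absurd rfl hij
              · simp only [Fin.cases_zero, Fin.cases_succ]
                rw [Finset.disjoint_left]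
                intro x hxD hxB
                exact (Finset.mem_sdiff.1 ((hgb'.1 j') hxB)).2 hxD
              · simp only [Fin.cases_zero, Fin.cases_succ]
                rw [Finset.disjoint_right]
                intro x hxD hxB
                exact (Finset.mem_sdiff.1 ((hgb'.1 i') hxB)).2 hxD
              · simp only [Fin.cases_succ]
                exact hgb'.2.2.2.1 i' j' (fun h => hij (by rw [h]))
            · intro i j hij
              rcases Fin.eq_zero_or_eq_succ i with rfl | ⟨i', rfl⟩ <;>
                rcases Fin.eq_zero_or_eq_succ j with rfl | ⟨j', rfl⟩
              · exact absurd rfl hij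
              · simp only [Fin.cases_zero, Fin.cases_succ]
                obtain ⟨z, hz⟩ := hgb'.2.1 j'
                have hz' := Finset.mem_sdiff.1 ((hgb'.1 j') hz)
                obtain ⟨u, huD, huR⟩ := hdom z hz'.1 hz'.2
                exact ⟨u, huD, z, hz, huR⟩
              · simp only [Fin.cases_zero, Fin.cases_succ]
                obtain ⟨z, hz⟩ := hgb'.2.1 i'
                have hz' := Finset.mem_sdiff.1 ((hgb'.1 i') hz)
                obtain ⟨u, huD, huR⟩ := hdom z hz'.1 hz'.2
                exact ⟨z, hz, u, huD, hsym huR⟩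
              · simp only [Fin.cases_succ]
                exact hgb'.2.2.2.2 i' j' (fun h => hij (by rw [h]))
          · have hX : 2 * maxIndep R (S \ D) - 1 ≤ 2 * maxIndep R S - 1 := by omega
            have h1 : q' * (2 * maxIndep R (S \ D) - 1) ≤ q' * (2 * maxIndep R S - 1) :=
              Nat.mul_le_mul_left _ hX
            have h2 : (q' + 1) * (2 * maxIndep R S - 1) =
                q' * (2 * maxIndep R S - 1) + (2 * maxIndep R S - 1) := by ring
            omega
        · -- D = S
          have hSD : S ⊆ D := by
            intro x hx
            by_contra hxD
            exact hresid ⟨x, Finset.mem_sdiff.2 ⟨hx, hxD⟩⟩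
          have hScard : S.card ≤ D.card := Finset.card_le_card hSD
          refine ⟨1, fun _ => S, ⟨fun _ => Finset.Subset.refl _, fun _ => ⟨v, hv⟩,
            fun _ => hSconn, fun i j hij => absurd (Subsingleton.elim i j) hij,
            fun i j hij => absurd (Subsingleton.elim i j) hij⟩, ?_⟩
          have : 1 * (2 * maxIndep R S - 1) = 2 * maxIndep R S - 1 := by ring
          omega
      · -- disconnected
        have hSC : (S \ C).Nonempty :=
          Finset.sdiff_nonempty.2 (fun h => hCeq (Finset.Subset.antisymm hCS h))
        have hsplit : (S \ C).card + C.card = S.card :=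
          Finset.card_sdiff_add_card_eq_card hCS
        have hCpos : 1 ≤ C.card := Finset.card_pos.2 ⟨v, hvC⟩
        have hSCpos : 1 ≤ (S \ C).card := Finset.card_pos.2 hSC
        obtain ⟨qC, BC, hgbC, hbC⟩ := ih C (by omega) ⟨v, hvC⟩
        obtain ⟨q', B', hgb', hb'⟩ := ih (S \ C) (by omega) hSC
        -- α_C + α' ≤ α
        obtain ⟨TC, hTCs, hTCi, hTCc⟩ := maxIndep_spec R C
        obtain ⟨T', hT's, hT'i, hT'c⟩ := maxIndep_spec R (S \ C)
        have hdisj : Disjoint TC T' := by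
          rw [Finset.disjoint_left]
          intro x hx hx'
          exact (Finset.mem_sdiff.1 (hT's hx')).2 (hTCs hx)
        have hunion : IndepOn R (TC ∪ T') := by
          intro x hx y hy hxy
          rcases Finset.mem_union.1 hx with hx | hx <;> rcases Finset.mem_union.1 hy with hy | hy
          · exact hTCi x hx y hy hxy
          · have hy' := Finset.mem_sdiff.1 (hT's hy)
            exact hbound x (hTCs hx) y hy'.1 hy'.2
          · have hx' := Finset.mem_sdiff.1 (hT's hx)
            intro hR
            exact hbound y (hTCs hy) x hx'.1 hx'.2 (hsym hR)
          · exact hT'i x hx y hy hxy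
        have hsum : maxIndep R C + maxIndep R (S \ C) ≤ maxIndep R S := by
          have hcard : (TC ∪ T').card = TC.card + T'.card := Finset.card_union_of_disjoint hdisj
          have hsub : TC ∪ T' ⊆ S :=
            Finset.union_subset (hTCs.trans hCS) (hT's.trans Finset.sdiff_subset)
          have := le_maxIndep hsub hunion
          omega
        have hαC1 : 1 ≤ maxIndep R C := one_le_maxIndep ⟨v, hvC⟩
        have hα'1 : 1 ≤ maxIndep R (S \ C) := one_le_maxIndep hSC
        by_cases hq : qC ≤ q'
        · refine ⟨q', B', GoodBlobs.mono Finset.sdiff_subset hgb', ?_⟩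
          have h1 : qC * (2 * maxIndep R C - 1) ≤ q' * (2 * maxIndep R C - 1) :=
            Nat.mul_le_mul_right _ hq
          have h2 : q' * (2 * maxIndep R C - 1) + q' * (2 * maxIndep R (S \ C) - 1) =
              q' * ((2 * maxIndep R C - 1) + (2 * maxIndep R (S \ C) - 1)) := by ring
          have h3 : q' * ((2 * maxIndep R C - 1) + (2 * maxIndep R (S \ C) - 1)) ≤
              q' * (2 * maxIndep R S - 1) := Nat.mul_le_mul_left _ (by omega)
          omega
        · refine ⟨qC, BC, GoodBlobs.mono hCS hgbC, ?_⟩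
          have h1 : q' * (2 * maxIndep R (S \ C) - 1) ≤ qC * (2 * maxIndep R (S \ C) - 1) :=
            Nat.mul_le_mul_right _ (by omega)
          have h2 : qC * (2 * maxIndep R C - 1) + qC * (2 * maxIndep R (S \ C) - 1) =
              qC * ((2 * maxIndep R C - 1) + (2 * maxIndep R (S \ C) - 1)) := by ring
          have h3 : qC * ((2 * maxIndep R C - 1) + (2 * maxIndep R (S \ C) - 1)) ≤
              qC * (2 * maxIndep R S - 1) := Nat.mul_le_mul_left _ (by omega)
          omega

lemma DM_use {R : ι → ι → Prop} (hsym : Symmetric R) (S : Finset ι) (k q0 : ℕ)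
    (hk : 1 ≤ k) (h : q0 * (2 * k - 1) ≤ S.card) :
    (∃ T ⊆ S, IndepOn R T ∧ T.card = k) ∨
    (∃ B : Fin q0 → Finset ι, GoodBlobs R S B) := by
  by_cases hα : k ≤ maxIndep R S
  · left
    obtain ⟨T, hTS, hTI, hTc⟩ := maxIndep_spec R S
    obtain ⟨T', hT'T, hT'c⟩ := Finset.exists_subset_card_eq (s := T) (n := k) (by omega)
    exact ⟨T', hT'T.trans hTS, hTI.mono hT'T, hT'c⟩
  · right
    rcases S.eq_empty_or_nonempty with rfl | hne
    · have hq0 : q0 = 0 := by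
        simp only [Finset.card_empty] at h
        have : 1 ≤ 2 * k - 1 := by omega
        nlinarith
      subst hq0
      exact ⟨Fin.elim0, fun i => i.elim0, fun i => i.elim0, fun i => i.elim0,
        fun i => i.elim0, fun i => i.elim0⟩
    · obtain ⟨q, B, hgb, hb⟩ := DMexact hsym S.card S le_rfl hne
      have hq0q : q0 ≤ q := by
        have hmono : q * (2 * maxIndep R S - 1) ≤ q * (2 * k - 1) :=
          Nat.mul_le_mul_left _ (by omega)
        have h2k : 0 < 2 * k - 1 := by omega
        have : q0 * (2 * k - 1) ≤ q * (2 * k - 1) := by omega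
        exact Nat.le_of_mul_le_mul_right this h2k
      refine ⟨fun i => B (Fin.castLE hq0q i), fun i => hgb.1 _, fun i => hgb.2.1 _,
        fun i => hgb.2.2.1 _, fun i j hij => hgb.2.2.2.1 _ _ ?_,
        fun i j hij => hgb.2.2.2.2 _ _ ?_⟩ <;>
      · intro hcontra
        exact hij (Fin.castLE_injective _ hcontra)

end DMwork


lemma ktst_adj_ll {t : ℕ} (i j : Fin t) : (ktst t).Adj (Sum.inl i) (Sum.inl j) ↔ i ≠ j := by
  simp [ktst, SimpleGraph.fromRel_adj]
  tauto

lemma ktst_adj_lr {t : ℕ} (i j : Fin t) : (ktst t).Adj (Sum.inl i) (Sum.inr j) ↔ i = j := by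
  simp [ktst, SimpleGraph.fromRel_adj]

lemma ktst_adj_rl {t : ℕ} (i j : Fin t) : (ktst t).Adj (Sum.inr i) (Sum.inl j) ↔ j = i := by
  simp [ktst, SimpleGraph.fromRel_adj]

lemma ktst_adj_rr {t : ℕ} (i j : Fin t) : ¬ (ktst t).Adj (Sum.inr i) (Sum.inr j) := by
  simp [ktst, SimpleGraph.fromRel_adj]

lemma ktkt_adj_ll {t : ℕ} (i j : Fin t) : (ktkt t).Adj (Sum.inl i) (Sum.inl j) ↔ i ≠ j := by
  simp [ktkt, SimpleGraph.fromRel_adj]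
  tauto

lemma ktkt_adj_lr {t : ℕ} (i j : Fin t) : (ktkt t).Adj (Sum.inl i) (Sum.inr j) ↔ i = j := by
  simp [ktkt, SimpleGraph.fromRel_adj]

lemma ktkt_adj_rl {t : ℕ} (i j : Fin t) : (ktkt t).Adj (Sum.inr i) (Sum.inl j) ↔ j = i := by
  simp [ktkt, SimpleGraph.fromRel_adj]

lemma ktkt_adj_rr {t : ℕ} (i j : Fin t) : (ktkt t).Adj (Sum.inr i) (Sum.inr j) ↔ i ≠ j := by
  simp [ktkt, SimpleGraph.fromRel_adj]
  tauto

section ModelSection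

variable {V : Type} (G : SimpleGraph V)

lemma induce_singleton_connected (v : V) : (G.induce {v}).Connected := by
  haveI : Nonempty ({v} : Set V) := ⟨⟨v, rfl⟩⟩
  refine ⟨fun x y => ?_⟩
  have hx : x = y := Subtype.ext (x.2.trans y.2.symm)
  rw [hx]

lemma induce_image_connected {m : ℕ} {f : Fin m → V} {J : Finset (Fin m)}
    (hne : J.Nonempty) (hconn : DMwork.ConnOn (fun p q => G.Adj (f p) (f q)) J) :
    (G.induce (f '' (J : Set (Fin m)))).Connected := by
  set s : Set V := f '' (J : Set (Fin m)) with hs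
  have hmem : ∀ p : Fin m, p ∈ J → f p ∈ s := by
    intro p hp
    exact ⟨p, hp, rfl⟩
  have key : ∀ p q : Fin m, DMwork.ReachIn (fun p q => G.Adj (f p) (f q)) J p q →
      ∀ (hp : f p ∈ s) (hq : f q ∈ s), (G.induce s).Reachable ⟨f p, hp⟩ ⟨f q, hq⟩ := by
    intro p q h
    induction h with
    | refl => intro hp hq; exact SimpleGraph.Reachable.refl _
    | @tail u z _ hstep ih =>
        intro hp hq
        obtain ⟨huJ, hzJ, hR⟩ := hstep
        have hu : f u ∈ s := hmem u huJ
        have hadj : (G.induce s).Adj ⟨f u, hu⟩ ⟨f z, hq⟩ := hR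
        exact (ih hp hu).trans hadj.reachable
  obtain ⟨p0, hp0⟩ := hne
  haveI : Nonempty s := ⟨⟨f p0, hmem p0 hp0⟩⟩
  refine ⟨fun x y => ?_⟩
  obtain ⟨xv, hxs⟩ := x
  obtain ⟨yv, hys⟩ := y
  obtain ⟨p, hpJ, rfl⟩ := hxs
  obtain ⟨q, hqJ, rfl⟩ := hys
  exact key p q (hconn p hpJ q hqJ) (hmem p hpJ) (hmem q hqJ)

variable {A : Set V} {m : ℕ} {a b : Fin m → V}

lemma model_O1 {t : ℕ}
    (ha : Function.Injective a) (hb : Function.Injective b)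
    (haA : ∀ i, a i ∈ A) (hbA : ∀ i, b i ∉ A)
    (hcross : ∀ i j, G.Adj (a i) (b j) ↔ i = j)
    (J : Fin t → Finset (Fin m)) (x : Fin t → Fin m)
    (hJne : ∀ i, (J i).Nonempty)
    (hJconn : ∀ i, DMwork.ConnOn (fun p q => G.Adj (a p) (a q)) (J i))
    (hJdisj : ∀ i j, i ≠ j → Disjoint (J i) (J j))
    (hJadj : ∀ i j, i ≠ j → DMwork.AdjSets (fun p q => G.Adj (a p) (a q)) (J i) (J j))
    (hxJ : ∀ i, x i ∈ J i)
    (hxB : ∀ i j, i ≠ j → ¬ G.Adj (b (x i)) (b (x j))) :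
    HasInducedMinor G (ktst t) := by
  have hJd : ∀ i j, i ≠ j → ∀ p ∈ J i, ∀ q ∈ J j, p ≠ q := by
    intro i j hij p hp q hq h
    rw [h] at hp
    exact (Finset.disjoint_left.1 (hJdisj i j hij) hp) hq
  refine ⟨Sum.elim (fun i => a '' ((J i : Set (Fin m)))) (fun i => {b (x i)}), ?_, ?_, ?_, ?_⟩
  · rintro (i | i)
    · exact induce_image_connected G (hJne i) (hJconn i)
    · exact induce_singleton_connected G _
  · rintro (i | i) (j | j) hne
    · have hij : i ≠ j := fun h => hne (by rw [h])
      rw [Set.disjoint_left]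
      rintro v ⟨p, hp, rfl⟩ ⟨q, hq, hpq⟩
      exact hJd j i hij.symm q hq p hp (ha hpq)
    · rw [Set.disjoint_left]
      rintro v ⟨p, hp, rfl⟩ hmem
      have hveq : a p = b (x j) := hmem
      exact hbA (x j) (hveq ▸ haA p)
    · rw [Set.disjoint_right]
      rintro v ⟨p, hp, rfl⟩ hmem
      have hveq : a p = b (x i) := hmem
      exact hbA (x i) (hveq ▸ haA p)
    · have hij : i ≠ j := fun h => hne (by rw [h])
      rw [Set.disjoint_left]
      rintro v hv hv'
      have h1 : v = b (x i) := hv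
      have h2 : v = b (x j) := hv'
      have : x i = x j := hb (h1 ▸ h2)
      exact hJd i j hij (x i) (hxJ i) (x j) (hxJ j) this
  · rintro (i | i) (j | j) hadj
    · rw [ktst_adj_ll] at hadj
      obtain ⟨p, hp, q, hq, hR⟩ := hJadj i j hadj
      exact ⟨a p, ⟨p, hp, rfl⟩, a q, ⟨q, hq, rfl⟩, hR⟩
    · rw [ktst_adj_lr] at hadj
      exact ⟨a (x i), ⟨x i, hxJ i, rfl⟩, b (x j), rfl,
        (hcross (x i) (x j)).2 (by rw [hadj])⟩
    · rw [ktst_adj_rl] at hadj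
      exact ⟨b (x i), rfl, a (x j), ⟨x j, hxJ j, rfl⟩,
        ((hcross (x j) (x i)).2 (by rw [hadj])).symm⟩
    · exact absurd hadj (ktst_adj_rr i j)
  · rintro (i | i) (j | j) hne hnadj
    · exfalso
      apply hnadj
      rw [ktst_adj_ll]
      intro h
      exact hne (by rw [h])
    · rw [ktst_adj_lr] at hnadj
      have hij : i ≠ j := hnadj
      rintro v ⟨p, hp, rfl⟩ u hu
      have hueq : u = b (x j) := hu
      subst hueq
      intro hGadj
      have hpx : p = x j := (hcross p (x j)).1 hGadj
      exact hJd i j hij p hp (x j) (hxJ j) hpx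
    · rw [ktst_adj_rl] at hnadj
      have hij : j ≠ i := hnadj
      rintro v hv u ⟨p, hp, rfl⟩
      have hveq : v = b (x i) := hv
      subst hveq
      intro hGadj
      have hpx : p = x i := (hcross p (x i)).1 hGadj.symm
      exact hJd j i hij p hp (x i) (hxJ i) hpx
    · have hij : i ≠ j := fun h => hne (by rw [h])
      rintro v hv u hu
      have h1 : v = b (x i) := hv
      have h2 : u = b (x j) := hu
      subst h1; subst h2
      exact hxB i j hij

end ModelSection

section ModelSection2

variable {V : Type} (G : SimpleGraph V) {A : Set V} {m : ℕ} {a b : Fin m → V}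

lemma model_O2 {t : ℕ}
    (ha : Function.Injective a) (hb : Function.Injective b)
    (haA : ∀ i, a i ∈ A) (hbA : ∀ i, b i ∉ A)
    (hcross : ∀ i j, G.Adj (a i) (b j) ↔ i = j)
    (L : Fin t → Finset (Fin m)) (x : Fin t → Fin m)
    (hLne : ∀ i, (L i).Nonempty)
    (hLconn : ∀ i, DMwork.ConnOn (fun p q => G.Adj (b p) (b q)) (L i))
    (hLdisj : ∀ i j, i ≠ j → Disjoint (L i) (L j))
    (hLadj : ∀ i j, i ≠ j → DMwork.AdjSets (fun p q => G.Adj (b p) (b q)) (L i) (L j))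
    (hxL : ∀ i, x i ∈ L i)
    (hxA : ∀ i j, i ≠ j → ¬ G.Adj (a (x i)) (a (x j))) :
    HasInducedMinor G (ktst t) := by
  have hLd : ∀ i j, i ≠ j → ∀ p ∈ L i, ∀ q ∈ L j, p ≠ q := by
    intro i j hij p hp q hq h
    rw [h] at hp
    exact (Finset.disjoint_left.1 (hLdisj i j hij) hp) hq
  refine ⟨Sum.elim (fun i => b '' ((L i : Set (Fin m)))) (fun i => {a (x i)}), ?_, ?_, ?_, ?_⟩
  · rintro (i | i)
    · exact induce_image_connected G (hLne i) (hLconn i)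
    · exact induce_singleton_connected G _
  · rintro (i | i) (j | j) hne
    · have hij : i ≠ j := fun h => hne (by rw [h])
      rw [Set.disjoint_left]
      rintro v ⟨p, hp, rfl⟩ ⟨q, hq, hpq⟩
      exact hLd j i hij.symm q hq p hp (hb hpq)
    · rw [Set.disjoint_left]
      rintro v ⟨p, hp, rfl⟩ hmem
      have hveq : b p = a (x j) := hmem
      exact hbA p (hveq ▸ haA (x j))
    · rw [Set.disjoint_right]
      rintro v ⟨p, hp, rfl⟩ hmem
      have hveq : b p = a (x i) := hmem
      exact hbA p (hveq ▸ haA (x i))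
    · have hij : i ≠ j := fun h => hne (by rw [h])
      rw [Set.disjoint_left]
      rintro v hv hv'
      have h1 : v = a (x i) := hv
      have h2 : v = a (x j) := hv'
      have : x i = x j := ha (h1 ▸ h2)
      exact hLd i j hij (x i) (hxL i) (x j) (hxL j) this
  · rintro (i | i) (j | j) hadj
    · rw [ktst_adj_ll] at hadj
      obtain ⟨p, hp, q, hq, hR⟩ := hLadj i j hadj
      exact ⟨b p, ⟨p, hp, rfl⟩, b q, ⟨q, hq, rfl⟩, hR⟩
    · rw [ktst_adj_lr] at hadj
      exact ⟨b (x i), ⟨x i, hxL i, rfl⟩, a (x j), rfl,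
        ((hcross (x j) (x i)).2 (by rw [hadj])).symm⟩
    · rw [ktst_adj_rl] at hadj
      exact ⟨a (x i), rfl, b (x j), ⟨x j, hxL j, rfl⟩,
        (hcross (x i) (x j)).2 (by rw [hadj])⟩
    · exact absurd hadj (ktst_adj_rr i j)
  · rintro (i | i) (j | j) hne hnadj
    · exfalso
      apply hnadj
      rw [ktst_adj_ll]
      intro h
      exact hne (by rw [h])
    · rw [ktst_adj_lr] at hnadj
      have hij : i ≠ j := hnadj
      rintro v ⟨p, hp, rfl⟩ u hu
      have hueq : u = a (x j) := hu
      subst hueq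
      intro hGadj
      have hpx : x j = p := (hcross (x j) p).1 hGadj.symm
      exact hLd j i hij.symm (x j) (hxL j) p hp hpx
    · rw [ktst_adj_rl] at hnadj
      have hij : j ≠ i := hnadj
      rintro v hv u ⟨p, hp, rfl⟩
      have hveq : v = a (x i) := hv
      subst hveq
      intro hGadj
      have hpx : x i = p := (hcross (x i) p).1 hGadj
      exact hLd i j hij.symm (x i) (hxL i) p hp hpx
    · have hij : i ≠ j := fun h => hne (by rw [h])
      rintro v hv u hu
      have h1 : v = a (x i) := hv
      have h2 : u = a (x j) := hu
      subst h1; subst h2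
      exact hxA i j hij

lemma model_O3 {t : ℕ}
    (ha : Function.Injective a) (hb : Function.Injective b)
    (haA : ∀ i, a i ∈ A) (hbA : ∀ i, b i ∉ A)
    (hcross : ∀ i j, G.Adj (a i) (b j) ↔ i = j)
    (J L : Fin t → Finset (Fin m)) (c : Fin t → Fin m)
    (hJne : ∀ i, (J i).Nonempty)
    (hJconn : ∀ i, DMwork.ConnOn (fun p q => G.Adj (a p) (a q)) (J i))
    (hJdisj : ∀ i j, i ≠ j → Disjoint (J i) (J j))
    (hJadj : ∀ i j, i ≠ j → DMwork.AdjSets (fun p q => G.Adj (a p) (a q)) (J i) (J j))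
    (hLne : ∀ i, (L i).Nonempty)
    (hLconn : ∀ i, DMwork.ConnOn (fun p q => G.Adj (b p) (b q)) (L i))
    (hLdisj : ∀ i j, i ≠ j → Disjoint (L i) (L j))
    (hLadj : ∀ i j, i ≠ j → DMwork.AdjSets (fun p q => G.Adj (b p) (b q)) (L i) (L j))
    (hcJ : ∀ i, c i ∈ J i) (hcL : ∀ i, c i ∈ L i)
    (hJLd : ∀ i j, i ≠ j → ∀ p ∈ J i, ∀ q ∈ L j, p ≠ q) :
    HasInducedMinor G (ktkt t) := by
  have hJd : ∀ i j, i ≠ j → ∀ p ∈ J i, ∀ q ∈ J j, p ≠ q := by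
    intro i j hij p hp q hq h
    rw [h] at hp
    exact (Finset.disjoint_left.1 (hJdisj i j hij) hp) hq
  have hLd : ∀ i j, i ≠ j → ∀ p ∈ L i, ∀ q ∈ L j, p ≠ q := by
    intro i j hij p hp q hq h
    rw [h] at hp
    exact (Finset.disjoint_left.1 (hLdisj i j hij) hp) hq
  refine ⟨Sum.elim (fun i => a '' ((J i : Set (Fin m)))) (fun i => b '' ((L i : Set (Fin m)))),
    ?_, ?_, ?_, ?_⟩
  · rintro (i | i)
    · exact induce_image_connected G (hJne i) (hJconn i)
    · exact induce_image_connected G (hLne i) (hLconn i)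
  · rintro (i | i) (j | j) hne
    · have hij : i ≠ j := fun h => hne (by rw [h])
      rw [Set.disjoint_left]
      rintro v ⟨p, hp, rfl⟩ ⟨q, hq, hpq⟩
      exact hJd j i hij.symm q hq p hp (ha hpq)
    · rw [Set.disjoint_left]
      rintro v ⟨p, hp, rfl⟩ ⟨q, hq, hpq⟩
      exact hbA q (hpq ▸ haA p)
    · rw [Set.disjoint_left]
      rintro v ⟨p, hp, rfl⟩ ⟨q, hq, hpq⟩
      exact hbA p (hpq.symm ▸ haA q)
    · have hij : i ≠ j := fun h => hne (by rw [h])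
      rw [Set.disjoint_left]
      rintro v ⟨p, hp, rfl⟩ ⟨q, hq, hpq⟩
      exact hLd j i hij.symm q hq p hp (hb hpq)
  · rintro (i | i) (j | j) hadj
    · rw [ktkt_adj_ll] at hadj
      obtain ⟨p, hp, q, hq, hR⟩ := hJadj i j hadj
      exact ⟨a p, ⟨p, hp, rfl⟩, a q, ⟨q, hq, rfl⟩, hR⟩
    · rw [ktkt_adj_lr] at hadj
      exact ⟨a (c i), ⟨c i, hcJ i, rfl⟩, b (c j), ⟨c j, hcL j, rfl⟩,
        (hcross (c i) (c j)).2 (by rw [hadj])⟩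
    · rw [ktkt_adj_rl] at hadj
      exact ⟨b (c i), ⟨c i, hcL i, rfl⟩, a (c j), ⟨c j, hcJ j, rfl⟩,
        ((hcross (c j) (c i)).2 (by rw [hadj])).symm⟩
    · rw [ktkt_adj_rr] at hadj
      obtain ⟨p, hp, q, hq, hR⟩ := hLadj i j hadj
      exact ⟨b p, ⟨p, hp, rfl⟩, b q, ⟨q, hq, rfl⟩, hR⟩
  · rintro (i | i) (j | j) hne hnadj
    · exfalso
      apply hnadj
      rw [ktkt_adj_ll]
      intro h
      exact hne (by rw [h])
    · rw [ktkt_adj_lr] at hnadj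
      have hij : i ≠ j := hnadj
      rintro v ⟨p, hp, rfl⟩ u ⟨q, hq, rfl⟩
      intro hGadj
      have hpq : p = q := (hcross p q).1 hGadj
      exact hJLd i j hij p hp q hq hpq
    · rw [ktkt_adj_rl] at hnadj
      have hij : j ≠ i := hnadj
      rintro v ⟨p, hp, rfl⟩ u ⟨q, hq, rfl⟩
      intro hGadj
      have hpq : q = p := (hcross q p).1 hGadj.symm
      exact hJLd j i hij q hq p hp hpq
    · exfalso
      apply hnadj
      rw [ktkt_adj_rr]
      intro h
      exact hne (by rw [h])

end ModelSection2

section CoreSection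

lemma core_lemma {V : Type} [Fintype V] (G : SimpleGraph V) (A : Set V) (w t : ℕ)
    (ht : 1 ≤ t) (a b : Fin (8*(w+1)*t^3) → V)
    (ha : Function.Injective a) (hb : Function.Injective b)
    (haA : ∀ i, a i ∈ A) (hbA : ∀ i, b i ∉ A)
    (hcross : ∀ i j, G.Adj (a i) (b j) ↔ i = j)
    (hnosim : ¬ IsSimMatching G A (w+1)) :
    HasInducedMinor G (ktkt t) ∨ HasInducedMinor G (ktst t) := by
  set HA : Fin (8*(w+1)*t^3) → Fin (8*(w+1)*t^3) → Prop := fun p q => G.Adj (a p) (a q) with hHA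
  set HB : Fin (8*(w+1)*t^3) → Fin (8*(w+1)*t^3) → Prop := fun p q => G.Adj (b p) (b q) with hHB
  have hAsym : Symmetric HA := fun p q h => h.symm
  have hBsym : Symmetric HB := fun p q h => h.symm
  -- a set independent in both sides has size at most w
  have hnoind : ∀ T : Finset (Fin (8*(w+1)*t^3)), DMwork.IndepOn HA T → DMwork.IndepOn HB T →
      T.card ≤ w := by
    intro T hTA hTB
    by_contra hTc
    push_neg at hTc
    obtain ⟨T', hT'T, hT'c⟩ := Finset.exists_subset_card_eq (s := T) (n := w+1) (by omega)
    apply hnosim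
    have hT'A : DMwork.IndepOn HA T' := DMwork.IndepOn.mono hT'T hTA
    have hT'B : DMwork.IndepOn HB T' := DMwork.IndepOn.mono hT'T hTB
    set e := T'.orderIsoOfFin hT'c with he
    have ginj : Function.Injective (fun i : Fin (w+1) => (e i : Fin (8*(w+1)*t^3))) := by
      intro i j h
      exact e.injective (Subtype.ext h)
    refine ⟨fun i => a (e i), fun i => b (e i), fun x y hh => ginj (ha hh),
      fun x y hh => ginj (hb hh), fun i => haA _, fun i => hbA _, ?_, ?_, ?_⟩
    · intro i j
      rw [hcross]
      constructor
      · intro h; exact ginj h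
      · intro h; rw [h]
    · intro i j
      by_cases hij : i = j
      · subst hij; exact G.irrefl
      · exact hTA _ (hT'T (e i).2) _ (hT'T (e j).2) (fun h => hij (ginj h))
    · intro i j
      by_cases hij : i = j
      · subst hij; exact G.irrefl
      · exact hTB _ (hT'T (e i).2) _ (hT'T (e j).2) (fun h => hij (ginj h))
  have hk1 : 1 ≤ t * (2*w+1) := by
    have := Nat.mul_le_mul ht (show 1 ≤ 2*w+1 by omega)
    omega
  have hcard_univ : (Finset.univ : Finset (Fin (8*(w+1)*t^3))).card = 8*(w+1)*t^3 := by simp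
  have harith1 : 2*t^2 * (2*(t*(2*w+1)) - 1) ≤ (Finset.univ : Finset (Fin (8*(w+1)*t^3))).card := by
    rw [hcard_univ]
    have h1 : 2*(t*(2*w+1)) - 1 ≤ 2*(t*(2*w+1)) := by omega
    have h2 : 2*t^2 * (2*(t*(2*w+1)) - 1) ≤ 2*t^2*(2*(t*(2*w+1))) :=
      Nat.mul_le_mul_left _ h1
    have h3 : 2*t^2*(2*(t*(2*w+1))) = 8*w*t^3 + 4*t^3 := by ring
    have h4 : 8*(w+1)*t^3 = 8*w*t^3+8*t^3 := by ring
    have h5 : 0 ≤ t^3 := Nat.zero_le _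
    omega
  rcases DMwork.DM_use hBsym Finset.univ (t*(2*w+1)) (2*t^2) hk1 harith1 with
    ⟨T, hTS, hTB, hTc⟩ | ⟨L, hgbL⟩
  · -- big HB-independent set T
    have harith2 : t * (2*(w+1) - 1) ≤ T.card := by
      rw [hTc]
      have : 2*(w+1) - 1 = 2*w+1 := by omega
      rw [this]
    rcases DMwork.DM_use hAsym T (w+1) t (by omega) harith2 with
      ⟨T', hT'T, hT'A, hT'c⟩ | ⟨J, hgbJ⟩
    · exfalso
      have := hnoind T' hT'A (DMwork.IndepOn.mono hT'T hTB)
      omega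
    · -- HA-blobs inside T : use O1
      right
      set x : Fin t → Fin (8*(w+1)*t^3) := fun i => (hgbJ.2.1 i).choose with hx
      have hxJ : ∀ i, x i ∈ J i := fun i => (hgbJ.2.1 i).choose_spec
      have hxT : ∀ i, x i ∈ T := fun i => (hgbJ.1 i) (hxJ i)
      refine model_O1 G ha hb haA hbA hcross J x (hgbJ.2.1) (hgbJ.2.2.1)
        (hgbJ.2.2.2.1) (hgbJ.2.2.2.2) hxJ ?_
      intro i j hij
      have hne : x i ≠ x j := by
        intro h
        have := Finset.disjoint_left.1 (hgbJ.2.2.2.1 i j hij) (hxJ i)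
        rw [h] at this
        exact this (hxJ j)
      exact hTB _ (hxT i) _ (hxT j) hne
  · -- HB-blobs L : Fin (2t²)
    set y : Fin (2*t^2) → Fin (8*(w+1)*t^3) := fun k => (hgbL.2.1 k).choose with hy
    have hyL : ∀ k, y k ∈ L k := fun k => (hgbL.2.1 k).choose_spec
    have hyinj : Function.Injective y := by
      intro k l h
      by_contra hne
      have := Finset.disjoint_left.1 (hgbL.2.2.2.1 k l hne) (hyL k)
      rw [h] at this
      exact this (hyL l)
    set S2 : Finset (Fin (8*(w+1)*t^3)) := Finset.image y Finset.univ with hS2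
    have hS2card : S2.card = 2*t^2 := by
      rw [hS2, Finset.card_image_of_injective _ hyinj, Finset.card_univ, Fintype.card_fin]
    have harith3 : t * (2*t - 1) ≤ S2.card := by
      rw [hS2card]
      have h1 : t * (2*t-1) ≤ t * (2*t) := Nat.mul_le_mul_left _ (by omega)
      have h2 : t * (2*t) = 2*t^2 := by ring
      omega
    rcases DMwork.DM_use hAsym S2 t t ht harith3 with
      ⟨Y, hYS2, hYA, hYc⟩ | ⟨J, hgbJ⟩
    · -- HA-independent transversal: O2
      right
      set e := Y.orderIsoOfFin hYc with he
      have hκex : ∀ j : Fin t, ∃ k, y k = (e j : Fin (8*(w+1)*t^3)) := by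
        intro j
        have hmem : (e j : Fin (8*(w+1)*t^3)) ∈ S2 := hYS2 (e j).2
        rw [hS2, Finset.mem_image] at hmem
        obtain ⟨k, _, hk⟩ := hmem
        exact ⟨k, hk⟩
      choose κ hκ using hκex
      have hκinj : Function.Injective κ := by
        intro i j h
        have : (e i : Fin (8*(w+1)*t^3)) = (e j : Fin (8*(w+1)*t^3)) := by rw [← hκ i, ← hκ j, h]
        exact e.injective (Subtype.ext this)
      refine model_O2 G ha hb haA hbA hcross (fun j => L (κ j)) (fun j => y (κ j))
        (fun j => hgbL.2.1 _) (fun j => hgbL.2.2.1 _)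
        (fun i j hij => hgbL.2.2.2.1 _ _ (fun h => hij (hκinj h)))
        (fun i j hij => hgbL.2.2.2.2 _ _ (fun h => hij (hκinj h)))
        (fun j => hyL _) ?_
      intro i j hij
      have h1 := hYA _ (e i).2 _ (e j).2
        (fun h => hij (e.injective (Subtype.ext h)))
      rw [← hκ i, ← hκ j] at h1
      exact h1
    · -- HA-blobs J inside S2 : O3
      left
      set p : Fin t → Fin (8*(w+1)*t^3) := fun j => (hgbJ.2.1 j).choose with hp
      have hpJ : ∀ j, p j ∈ J j := fun j => (hgbJ.2.1 j).choose_spec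
      have hκex : ∀ j : Fin t, ∃ k, y k = p j := by
        intro j
        have hmem : p j ∈ S2 := hgbJ.1 j (hpJ j)
        rw [hS2, Finset.mem_image] at hmem
        obtain ⟨k, _, hk⟩ := hmem
        exact ⟨k, hk⟩
      choose κ hκ using hκex
      have hJd : ∀ i j, i ≠ j → ∀ u ∈ J i, ∀ v ∈ J j, u ≠ v := by
        intro i j hij u hu v hv h
        rw [h] at hu
        exact (Finset.disjoint_left.1 (hgbJ.2.2.2.1 i j hij) hu) hv
      have hκinj : Function.Injective κ := by
        intro i j h
        by_contra hne
        apply hJd i j hne (p i) (hpJ i) (p j) (hpJ j)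
        rw [← hκ i, ← hκ j, h]
      have hpL : ∀ j, p j ∈ L (κ j) := by
        intro j
        rw [← hκ j]
        exact hyL _
      refine model_O3 G ha hb haA hbA hcross J (fun j => L (κ j)) p
        (hgbJ.2.1) (hgbJ.2.2.1) (hgbJ.2.2.2.1) (hgbJ.2.2.2.2)
        (fun j => hgbL.2.1 _) (fun j => hgbL.2.2.1 _)
        (fun i j hij => hgbL.2.2.2.1 _ _ (fun h => hij (hκinj h)))
        (fun i j hij => hgbL.2.2.2.2 _ _ (fun h => hij (hκinj h)))
        hpJ hpL ?_
      intro i j hij u hu v hv h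
      -- u ∈ J i, v ∈ L (κ j), u = v; derive contradiction
      subst h
      have hmem : u ∈ S2 := hgbJ.1 i hu
      rw [hS2, Finset.mem_image] at hmem
      obtain ⟨k, _, hk⟩ := hmem
      have hkκ : k = κ j := by
        by_contra hne
        have := Finset.disjoint_left.1 (hgbL.2.2.2.1 k (κ j) hne) (hyL k)
        rw [hk] at this
        exact this hv
      have hup : u = p j := by rw [← hk, hkκ, hκ j]
      rw [hup] at hu
      exact hJd i j hij (p j) hu (p j) (hpJ j) rfl

end CoreSection

section GlueSection

variable {V : Type} [Fintype V]

lemma simMatching_zero (G : SimpleGraph V) (A : Set V) : IsSimMatching G A 0 :=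
  ⟨Fin.elim0, Fin.elim0, fun x => x.elim0, fun x => x.elim0, fun i => i.elim0,
    fun i => i.elim0, fun i => i.elim0, fun i => i.elim0, fun i => i.elim0⟩

lemma mimMatching_zero (G : SimpleGraph V) (A : Set V) : IsMimMatching G A 0 :=
  ⟨Fin.elim0, Fin.elim0, fun x => x.elim0, fun x => x.elim0, fun i => i.elim0,
    fun i => i.elim0, fun i => i.elim0⟩

lemma simMatching_le (G : SimpleGraph V) (A : Set V) {n : ℕ} (h : IsSimMatching G A n) :
    n ≤ Fintype.card V := by
  obtain ⟨a, _, ha, _⟩ := h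
  have := Fintype.card_le_of_injective a ha
  simpa using this

lemma mimMatching_le (G : SimpleGraph V) (A : Set V) {n : ℕ} (h : IsMimMatching G A n) :
    n ≤ Fintype.card V := by
  obtain ⟨a, _, ha, _⟩ := h
  have := Fintype.card_le_of_injective a ha
  simpa using this

lemma simval_ge (G : SimpleGraph V) (A : Set V) {n : ℕ} (h : IsSimMatching G A n) :
    n ≤ simval G A :=
  le_csSup ⟨Fintype.card V, fun k hk => simMatching_le G A hk⟩ h

lemma simval_card_le (G : SimpleGraph V) (A : Set V) : simval G A ≤ Fintype.card V :=
  csSup_le ⟨0, simMatching_zero G A⟩ (fun n hn => simMatching_le G A hn)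

lemma mimval_le_of (G : SimpleGraph V) (A : Set V) {c : ℕ}
    (h : ∀ n, IsMimMatching G A n → n ≤ c) : mimval G A ≤ c :=
  csSup_le ⟨0, mimMatching_zero G A⟩ (fun n hn => h n hn)

lemma mim_trunc (G : SimpleGraph V) (A : Set V) {m n : ℕ} (h : m ≤ n)
    (hM : IsMimMatching G A n) : IsMimMatching G A m := by
  obtain ⟨a, b, ha, hb, haA, hbA, hcr⟩ := hM
  refine ⟨fun i => a (Fin.castLE h i), fun i => b (Fin.castLE h i),
    fun x y hh => Fin.castLE_injective h (ha hh),
    fun x y hh => Fin.castLE_injective h (hb hh),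
    fun i => haA _, fun i => hbA _, ?_⟩
  intro i j
  rw [hcr]
  exact ⟨fun hh => Fin.castLE_injective h hh, fun hh => by rw [hh]⟩

lemma ktkt_zero_minor (G : SimpleGraph V) : HasInducedMinor G (ktkt 0) := by
  refine ⟨Sum.elim (fun i => i.elim0) (fun i => i.elim0), ?_, ?_, ?_, ?_⟩ <;>
    rintro (i | i) <;> exact i.elim0

lemma cut_bound (G : SimpleGraph V) (w t : ℕ)
    (h1 : ¬ HasInducedMinor G (ktkt t)) (h2 : ¬ HasInducedMinor G (ktst t))
    (A : Set V) (hsimA : simval G A ≤ w) :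
    mimval G A ≤ 8*(w+1)*t^3 - 1 := by
  have ht : 1 ≤ t := by
    by_contra h
    have h0 : t = 0 := by omega
    subst h0
    exact h1 (ktkt_zero_minor G)
  have hpos : 1 ≤ 8*(w+1)*t^3 := by
    have h3 : 1 ≤ t^3 := Nat.one_le_pow _ _ (by omega)
    have := Nat.mul_le_mul (show 1 ≤ 8*(w+1) by omega) h3
    omega
  apply mimval_le_of
  intro n hn
  by_contra hbig
  have hm : 8*(w+1)*t^3 ≤ n := by omega
  obtain ⟨a, b, ha, hb, haA, hbA, hcr⟩ := mim_trunc G A hm hn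
  have hnosim : ¬ IsSimMatching G A (w+1) := by
    intro hs
    have := simval_ge G A hs
    omega
  rcases core_lemma G A w t ht a b ha hb haA hbA hcr hnosim with h | h
  · exact h1 h
  · exact h2 h

end GlueSection


/-- every graph of sim-width at most `w` with no induced minor isomorphic
to `K_t ⊠ K_t` or `K_t ⊠ S_t` has mim-width at most `8(w+1)t³ − 1`; more precisely, any
branch-decomposition of sim-width at most `w` has mim-width at most `8(w+1)t³ − 1`. -/
theorem stmt13 {V : Type} [Fintype V] (G : SimpleGraph V) (w t : ℕ)
    (hsim : simw G ≤ w)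
    (h1 : ¬ HasInducedMinor G (ktkt t)) (h2 : ¬ HasInducedMinor G (ktst t)) :
    mimw G ≤ 8 * (w + 1) * t ^ 3 - 1 ∧
    ∀ D : BranchDecomp V,
      (∀ x y, D.T.Adj x y → simval G (D.cut x y) ≤ w) →
      ∀ x y, D.T.Adj x y → mimval G (D.cut x y) ≤ 8 * (w + 1) * t ^ 3 - 1 := by
  have hcut : ∀ A : Set V, simval G A ≤ w → mimval G A ≤ 8*(w+1)*t^3 - 1 :=
    cut_bound G w t h1 h2
  have hpart2 : ∀ D : BranchDecomp V,
      (∀ x y, D.T.Adj x y → simval G (D.cut x y) ≤ w) →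
      ∀ x y, D.T.Adj x y → mimval G (D.cut x y) ≤ 8 * (w + 1) * t ^ 3 - 1 :=
    fun D hD x y hxy => hcut _ (hD x y hxy)
  refine ⟨?_, hpart2⟩
  by_cases hS : {w' | ∃ D : BranchDecomp V,
      ∀ x y, D.T.Adj x y → simval G (D.cut x y) ≤ w'}.Nonempty
  · obtain ⟨D, hD⟩ := Nat.sInf_mem hS
    have hDle : ∀ x y, D.T.Adj x y → simval G (D.cut x y) ≤ w :=
      fun x y hxy => le_trans (hD x y hxy) hsim
    have hmem : (8 * (w + 1) * t ^ 3 - 1) ∈ {w' | ∃ D : BranchDecomp V,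
        ∀ x y, D.T.Adj x y → mimval G (D.cut x y) ≤ w'} :=
      ⟨D, fun x y hxy => hcut _ (hDle x y hxy)⟩
    exact Nat.sInf_le hmem
  · have hM : {w' | ∃ D : BranchDecomp V,
        ∀ x y, D.T.Adj x y → mimval G (D.cut x y) ≤ w'} = ∅ := by
      rw [Set.eq_empty_iff_forall_notMem]
      rintro w' ⟨D, hD⟩
      exact hS ⟨Fintype.card V, D, fun x y hxy => simval_card_le G _⟩
    show sInf _ ≤ _
    rw [hM, Nat.sInf_empty]
    exact Nat.zero_le _
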